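/- arXiv:1807.03708 — 3 statements merged into one kernel-verified Lean document; each statement's English description precedes it below -/
import Mathlib

section
/- Let M = !![2, 2; 2, 2] be the real 2×2 matrix with all entries 2, let θ ∈ ℝ², and let γ ∈ [0, 1/4). For s ∈ ℝ² define the trajectory s_0 = s and s_{t+1} = M.mulVec s_t + θ (this is the closed-loop dynamics of the transition T(s,a) = (2s₁+2s₂+a₁, 2s₁+2s₂+a₂) under the constant policy a = θ), and define V(s) = ∑_{t=0}^∞ γ^t · (−⟨s_t, θ⟩), where ⟨·,·⟩ is the Euclidean inner product. Then the series defining V converges for every s, V is differentiable on ℝ², and its gradient at every s equals −(∑_{t=0}^∞ γ^t M^t).mulVec θ, where the matrix series ∑_{t=0}^∞ γ^t M^t is summable and equals I + ∑_{k=1}^∞ γ^k 2^{2k−1} E with E the all-ones 2×2 matrix. -/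
open Matrix Finset

private lemma aux_M_eq :
    (!![2,2;2,2] : Matrix (Fin 2) (Fin 2) ℝ) = (2:ℝ) • !![1,1;1,1] := by
  ext i j; fin_cases i <;> fin_cases j <;> norm_num

private lemma aux_E_mul_E :
    (!![1,1;1,1] : Matrix (Fin 2) (Fin 2) ℝ) * !![1,1;1,1] = (2:ℝ) • !![1,1;1,1] := by
  ext i j; fin_cases i <;> fin_cases j <;>
    simp [Matrix.mul_apply, Fin.sum_univ_two] <;> norm_num

private lemma aux_M_pow (k : ℕ) :
    (!![2,2;2,2] : Matrix (Fin 2) (Fin 2) ℝ) ^ (k+1) = ((2:ℝ)^(2*k+1)) • !![1,1;1,1] := by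
  induction k with
  | zero => simpa using aux_M_eq
  | succ n ih =>
    rw [pow_succ, ih, aux_M_eq, smul_mul_assoc, mul_smul_comm, aux_E_mul_E, smul_smul, smul_smul]
    congr 1

private lemma aux_M_symm :
    (!![2,2;2,2] : Matrix (Fin 2) (Fin 2) ℝ).transpose = !![2,2;2,2] := by
  ext i j; fin_cases i <;> fin_cases j <;> simp

private lemma aux_two_pow (k : ℕ) : (2:ℝ)^(2*k+1) = 2 * 4^k := by
  rw [pow_succ, pow_mul]; norm_num [mul_comm]

/-- Example 1 of the paper in full: for the transition `T(s,a) = (2s₁+2s₂+a₁, 2s₁+2s₂+a₂)`,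
constant policy `a = θ`, reward `r(s,a) = -sᵀa` and discount `γ < 1/4`, the value function
series converges, `V` is differentiable, and
`∇V(s) = -(∑ₜ γ^t M^t) θ = -(I + ∑_{k≥1} γ^k 2^(2k-1) E) θ`. -/
theorem stmt_10 (γ : ℝ) (hγ0 : 0 ≤ γ) (hγ : γ < 1 / 4)
    (θ : EuclideanSpace ℝ (Fin 2))
    (M E : Matrix (Fin 2) (Fin 2) ℝ)
    (hM : M = !![2, 2; 2, 2]) (hE : E = !![1, 1; 1, 1])
    (traj : EuclideanSpace ℝ (Fin 2) → ℕ → EuclideanSpace ℝ (Fin 2))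
    (htraj0 : ∀ s, traj s 0 = s)
    (htraj : ∀ s t, traj s (t + 1) =
      (WithLp.equiv 2 (Fin 2 → ℝ)).symm (M.mulVec (WithLp.equiv 2 (Fin 2 → ℝ) (traj s t))) + θ)
    (V : EuclideanSpace ℝ (Fin 2) → ℝ)
    (hV : ∀ s, V s = ∑' t : ℕ, γ ^ t * (-(inner ℝ (traj s t) θ : ℝ))) :
    (∀ s, Summable fun t : ℕ => γ ^ t * (-(inner ℝ (traj s t) θ : ℝ))) ∧
    (∀ s, DifferentiableAt ℝ V s) ∧
    Summable (fun t : ℕ => γ ^ t • M ^ t) ∧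
    (∑' t : ℕ, γ ^ t • M ^ t) = 1 + ∑' k : ℕ, (γ ^ (k + 1) * 2 ^ (2 * (k + 1) - 1)) • E ∧
    (∀ s, gradient V s = -(WithLp.equiv 2 (Fin 2 → ℝ)).symm
      ((∑' t : ℕ, γ ^ t • M ^ t).mulVec (WithLp.equiv 2 (Fin 2 → ℝ) θ))) := by
  subst hM hE
  have h4γ : (4:ℝ) * γ < 1 := by linarith
  have h4γ0 : (0:ℝ) ≤ 4 * γ := by linarith
  have sum_geo : Summable (fun k : ℕ => (4*γ)^k) := summable_geometric_of_lt_one h4γ0 h4γ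
  set e := WithLp.equiv 2 (Fin 2 → ℝ) with he
  set Mm : Matrix (Fin 2) (Fin 2) ℝ := !![2,2;2,2] with hMm
  set Em : Matrix (Fin 2) (Fin 2) ℝ := !![1,1;1,1] with hEm
  have M_pow : ∀ k : ℕ, Mm ^ (k+1) = ((2:ℝ)^(2*k+1)) • Em := by
    intro k; rw [hMm, hEm]; exact aux_M_pow k
  have M_symm : Mm.transpose = Mm := by rw [hMm]; exact aux_M_symm
  have inner_dot : ∀ x y : EuclideanSpace ℝ (Fin 2), (inner ℝ x y : ℝ) = (e x) ⬝ᵥ (e y) := by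
    intro x y
    simp [he, PiLp.inner_apply, RCLike.inner_apply, dotProduct, mul_comm]
  -- closed form for the trajectory
  have traj_cf : ∀ s t, e (traj s t) =
      (Mm ^ t).mulVec (e s) + (∑ i ∈ Finset.range t, Mm ^ i).mulVec (e θ) := by
    intro s t
    induction t with
    | zero =>
      simp [htraj0, Matrix.one_mulVec, Matrix.zero_mulVec]
    | succ n ih =>
      rw [htraj, (show ∀ a b : EuclideanSpace ℝ (Fin 2), e (a + b) = e a + e b from fun _ _ => rfl), Equiv.apply_symm_apply, ih, Matrix.mulVec_add,
        Matrix.mulVec_mulVec, Matrix.mulVec_mulVec, geom_sum_succ, Matrix.add_mulVec,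
        Matrix.one_mulVec, ← pow_succ']
      abel
  set c : ℕ → ℝ := fun t => ((∑ i ∈ Finset.range t, Mm ^ i).mulVec (e θ)) ⬝ᵥ (e θ) with hc
  have inner_traj : ∀ s t, (inner ℝ (traj s t) θ : ℝ)
      = (e s) ⬝ᵥ ((Mm ^ t).mulVec (e θ)) + c t := by
    intro s t
    rw [inner_dot, traj_cf, add_dotProduct]
    congr 1
    conv_rhs => rw [Matrix.dotProduct_mulVec, ← Matrix.mulVec_transpose,
      Matrix.transpose_pow, M_symm]
  have c_succ : ∀ t, c (t+1) = c t + ((Mm ^ t).mulVec (e θ)) ⬝ᵥ (e θ) := by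
    intro t
    simp only [hc, geom_sum_succ', Matrix.add_mulVec, add_dotProduct]
    ring
  set D : ℝ := |(e θ) ⬝ᵥ (e θ)| + |(Em.mulVec (e θ)) ⬝ᵥ (e θ)| with hD
  have d_bound : ∀ t, |((Mm ^ t).mulVec (e θ)) ⬝ᵥ (e θ)| ≤ D * 4 ^ t := by
    intro t
    cases t with
    | zero =>
      simp only [pow_zero, Matrix.one_mulVec, mul_one, hD]
      nlinarith [abs_nonneg ((Em.mulVec (e θ)) ⬝ᵥ (e θ))]
    | succ k =>
      rw [M_pow, Matrix.smul_mulVec, smul_dotProduct, smul_eq_mul, abs_mul,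
        aux_two_pow, hD, pow_succ]
      have h4 : (0:ℝ) < 4 ^ k := by positivity
      have h2 : |(2:ℝ) * 4 ^ k| = 2 * 4 ^ k := by
        rw [abs_of_nonneg]; positivity
      rw [h2]
      nlinarith [abs_nonneg ((e θ) ⬝ᵥ (e θ)), abs_nonneg ((Em.mulVec (e θ)) ⬝ᵥ (e θ))]
  have hD0 : (0:ℝ) ≤ D := by rw [hD]; positivity
  have c_bound : ∀ t, |c t| ≤ D * 4 ^ t := by
    intro t
    induction t with
    | zero =>
      simp only [hc, Finset.range_zero, Finset.sum_empty, Matrix.zero_mulVec,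
        zero_dotProduct, abs_zero, pow_zero, mul_one]
      exact hD0
    | succ n ih =>
      rw [c_succ]
      have h4 : (0:ℝ) < 4 ^ n := by positivity
      calc |c n + ((Mm ^ n).mulVec (e θ)) ⬝ᵥ (e θ)|
          ≤ |c n| + |((Mm ^ n).mulVec (e θ)) ⬝ᵥ (e θ)| := abs_add_le _ _
        _ ≤ D * 4 ^ n + D * 4 ^ n := add_le_add ih (d_bound n)
        _ ≤ D * 4 ^ (n+1) := by rw [pow_succ]; nlinarith
  -- summability of the two scalar pieces
  have hsum_h : Summable (fun t : ℕ => γ ^ t * c t) := by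
    apply Summable.of_norm_bounded (sum_geo.mul_left D)
    intro t
    rw [Real.norm_eq_abs, abs_mul, abs_pow, abs_of_nonneg hγ0, mul_pow]
    have h1 : (0:ℝ) ≤ γ ^ t := pow_nonneg hγ0 t
    calc γ ^ t * |c t| ≤ γ ^ t * (D * 4 ^ t) := mul_le_mul_of_nonneg_left (c_bound t) h1
      _ = D * (4 ^ t * γ ^ t) := by ring
  have g_succ : ∀ (s : EuclideanSpace ℝ (Fin 2)) (k : ℕ),
      γ^(k+1) * ((e s) ⬝ᵥ ((Mm^(k+1)).mulVec (e θ)))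
        = (2*γ*((e s) ⬝ᵥ (Em.mulVec (e θ)))) * (4*γ)^k := by
    intro s k
    rw [M_pow, Matrix.smul_mulVec, dotProduct_smul, smul_eq_mul, aux_two_pow,
      mul_pow]
    ring
  have hsum_g : ∀ s, Summable (fun t : ℕ => γ^t * ((e s) ⬝ᵥ ((Mm^t).mulVec (e θ)))) := by
    intro s
    apply (summable_nat_add_iff 1).mp
    simp only [g_succ s]
    exact sum_geo.mul_left _
  have hsplit : ∀ s, (fun t : ℕ => γ ^ t * (-(inner ℝ (traj s t) θ : ℝ)))
      = fun t => (-(γ^t * ((e s) ⬝ᵥ ((Mm^t).mulVec (e θ))))) + (-(γ^t * c t)) := by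
    intro s; funext t; rw [inner_traj]; ring
  have part1 : ∀ s, Summable fun t : ℕ => γ ^ t * (-(inner ℝ (traj s t) θ : ℝ)) := by
    intro s
    rw [hsplit s]
    exact (hsum_g s).neg.add hsum_h.neg
  -- the matrix series
  have hscal : ∀ k : ℕ, γ^(k+1) * (2:ℝ)^(2*(k+1)-1) = (2*γ) * (4*γ)^k := by
    intro k
    have h1 : 2*(k+1)-1 = 2*k+1 := by omega
    rw [h1, aux_two_pow, mul_pow]
    ring
  have mat_succ : ∀ k : ℕ, γ^(k+1) • Mm^(k+1) = (γ ^ (k + 1) * 2 ^ (2 * (k + 1) - 1)) • Em := by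
    intro k
    have h1 : 2*(k+1)-1 = 2*k+1 := by omega
    rw [M_pow, smul_smul, h1]
  have hsum_mat : Summable (fun t : ℕ => γ ^ t • Mm ^ t) := by
    apply (summable_nat_add_iff 1).mp
    simp only [mat_succ, hscal]
    exact (sum_geo.mul_left (2*γ)).smul_const Em
  have part4 : (∑' t : ℕ, γ ^ t • Mm ^ t)
      = 1 + ∑' k : ℕ, (γ ^ (k + 1) * 2 ^ (2 * (k + 1) - 1)) • Em := by
    rw [Summable.tsum_eq_zero_add hsum_mat]
    congr 1
    · simp
    · exact tsum_congr mat_succ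
  set β : ℝ := ∑' k : ℕ, γ ^ (k + 1) * (2:ℝ) ^ (2 * (k + 1) - 1) with hβ
  have hsum_scal : Summable (fun k : ℕ => γ ^ (k + 1) * (2:ℝ) ^ (2 * (k + 1) - 1)) := by
    simp only [hscal]
    exact sum_geo.mul_left _
  have hβ2 : β = (2*γ) * ∑' k : ℕ, (4*γ)^k := by
    rw [hβ, tsum_congr hscal, tsum_mul_left]
  have hS : (∑' k : ℕ, (γ ^ (k + 1) * 2 ^ (2 * (k + 1) - 1)) • Em) = β • Em :=
    Summable.tsum_smul_const hsum_scal Em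
  set u : EuclideanSpace ℝ (Fin 2) := e.symm (Em.mulVec (e θ)) with hu
  have hRHS : -(e.symm ((∑' t : ℕ, γ ^ t • Mm ^ t).mulVec (e θ))) = -(θ + β • u) := by
    rw [part4, hS, Matrix.add_mulVec, Matrix.one_mulVec, Matrix.smul_mulVec,
      (show ∀ a b : Fin 2 → ℝ, e.symm (a + b) = e.symm a + e.symm b from fun _ _ => rfl),
      (show ∀ (c : ℝ) (a : Fin 2 → ℝ), e.symm (c • a) = c • e.symm a from fun _ _ => rfl), Equiv.symm_apply_apply, hu]
  -- closed form for V
  have V_eq : ∀ s, V s = (inner ℝ (-(θ + β • u)) s : ℝ) + (- ∑' t : ℕ, γ^t * c t) := by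
    intro s
    rw [hV s, hsplit s, Summable.tsum_add (hsum_g s).neg hsum_h.neg, tsum_neg, tsum_neg]
    have hg : (∑' t : ℕ, γ^t * ((e s) ⬝ᵥ ((Mm^t).mulVec (e θ))))
        = (inner ℝ s θ : ℝ) + β * (inner ℝ s u : ℝ) := by
      rw [Summable.tsum_eq_zero_add (hsum_g s)]
      congr 1
      · rw [pow_zero, pow_zero, Matrix.one_mulVec, one_mul, inner_dot]
      · have h1 : ∀ k : ℕ, γ^(k+1) * ((e s) ⬝ᵥ ((Mm^(k+1)).mulVec (e θ)))
            = (2*γ*(inner ℝ s u : ℝ)) * (4*γ)^k := by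
          intro k
          rw [g_succ s k, inner_dot, hu, Equiv.apply_symm_apply]
        rw [tsum_congr h1, tsum_mul_left, hβ2]
        ring
    rw [hg]
    have h2 : (inner ℝ (-(θ + β • u)) s : ℝ)
        = -((inner ℝ s θ : ℝ) + β * (inner ℝ s u : ℝ)) := by
      rw [inner_neg_left, inner_add_left, real_inner_smul_left, real_inner_comm θ s,
        real_inner_comm u s]
    rw [h2]
  have grad : ∀ s, HasGradientAt V (-(θ + β • u)) s := by
    intro s
    have hVfun : V = fun x : EuclideanSpace ℝ (Fin 2) =>
        (inner ℝ (-(θ + β • u)) x : ℝ) + (- ∑' t : ℕ, γ^t * c t) := funext V_eq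
    rw [hVfun, hasGradientAt_iff_hasFDerivAt]
    have h1 : InnerProductSpace.toDual ℝ (EuclideanSpace ℝ (Fin 2)) (-(θ + β • u))
        = innerSL ℝ (-(θ + β • u)) := by
      ext y; simp [InnerProductSpace.toDual_apply_apply]
    rw [h1]
    exact ((innerSL ℝ (-(θ + β • u))).hasFDerivAt).add_const _
  refine ⟨part1, fun s => (grad s).differentiableAt, hsum_mat, part4, fun s => ?_⟩
  rw [(grad s).gradient]
  exact hRHS.symm
end

section
/- Let S be a type, T : S → S a map, γ ∈ [0, 1) a real number, and f : S → ℝ a function that is bounded below (there exists C such that f(s) ≥ C for all s) and satisfies f(s) ≥ γ · f(T(s)) for every s ∈ S. Then f(s) ≥ 0 for every s ∈ S. -/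
/-- The key step of the proof of Theorem 3 of the paper: a bounded-below function
satisfying the discounted self-improvement inequality `f(s) ≥ γ f(T(s))` along orbits
must be nonnegative everywhere. -/
theorem stmt_14 {S : Type*} (T : S → S) (γ : ℝ) (hγ0 : 0 ≤ γ) (hγ1 : γ < 1)
    (f : S → ℝ) (C : ℝ) (hbdd : ∀ s, C ≤ f s)
    (hrec : ∀ s, γ * f (T s) ≤ f s) :
    ∀ s, 0 ≤ f s := by
  intro s
  have key : ∀ n : ℕ, γ ^ n * C ≤ f s := by
    intro n
    have h : ∀ n : ℕ, γ ^ n * f (T^[n] s) ≤ f s := by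
      intro n
      induction n with
      | zero => simp
      | succ k ih =>
        calc γ ^ (k + 1) * f (T^[k + 1] s)
            = γ ^ k * (γ * f (T (T^[k] s))) := by
              rw [Function.iterate_succ_apply']; ring
          _ ≤ γ ^ k * f (T^[k] s) := by
              exact mul_le_mul_of_nonneg_left (hrec _) (pow_nonneg hγ0 k)
          _ ≤ f s := ih
    calc γ ^ n * C ≤ γ ^ n * f (T^[n] s) :=
          mul_le_mul_of_nonneg_left (hbdd _) (pow_nonneg hγ0 n)
      _ ≤ f s := h n
  have hlim : Filter.Tendsto (fun n : ℕ => γ ^ n * C) Filter.atTop (nhds 0) := by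
    have := (tendsto_pow_atTop_nhds_zero_of_lt_one hγ0 hγ1).mul_const C
    simpa using this
  exact le_of_tendsto hlim (Filter.Eventually.of_forall key)
end

section
/- Let n ≥ 1 and γ ∈ [0, 1). Let κ : ℝ^n → Measure(ℝ^n) assign to each state s a probability measure κ(s) on ℝ^n such that the identity map x ↦ x is Bochner integrable with respect to κ(s); define T*(s) = ∫ x dκ(s)(x) ∈ ℝ^n. Let r : ℝ^n → ℝ and let V, V* : ℝ^n → ℝ be functions such that: (i) V is convex on ℝ^n; (ii) for every s, V is integrable with respect to κ(s) and V satisfies the Bellman equation V(s) = r(s) + γ ∫ V(s') dκ(s)(s'); (iii) V* satisfies the deterministic Bellman equation V*(s) = r(s) + γ V*(T*(s)); and (iv) the function s ↦ V(s) − V*(s) is bounded below. Then V(s) ≥ V*(s) for every s ∈ ℝ^n, and consequently, for every probability measure p₀ on ℝ^n with respect to which V and V* are integrable, ∫ V dp₀ ≥ ∫ V* dp₀. -/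
open MeasureTheory

/-- Theorem 3 of the paper: if the value function `V` of the original MDP (with next-state
kernel `κ`) is convex, `V*` is the value function of the model-based augmented MDP whose
deterministic transition `T*(s)` is the mean of `κ(s)`, and `V - V*` is bounded below, then
`V ≥ V*` pointwise, and hence `J(μ_θ) = ∫ V dp₀ ≥ ∫ V* dp₀ = J*(μ_θ)` for every initial
distribution `p₀`. -/
theorem stmt_15 (n : ℕ) (hn : 1 ≤ n) (γ : ℝ) (hγ0 : 0 ≤ γ) (hγ1 : γ < 1)
    (κ : EuclideanSpace ℝ (Fin n) → Measure (EuclideanSpace ℝ (Fin n)))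
    (hκ : ∀ s, IsProbabilityMeasure (κ s))
    (hκint : ∀ s, Integrable (fun x => x) (κ s))
    (Tstar : EuclideanSpace ℝ (Fin n) → EuclideanSpace ℝ (Fin n))
    (hTstar : ∀ s, Tstar s = ∫ x, x ∂(κ s))
    (r V Vstar : EuclideanSpace ℝ (Fin n) → ℝ)
    (hVconv : ConvexOn ℝ Set.univ V)
    (hVint : ∀ s, Integrable V (κ s))
    (hBell : ∀ s, V s = r s + γ * ∫ s', V s' ∂(κ s))
    (hBellstar : ∀ s, Vstar s = r s + γ * Vstar (Tstar s))
    (C : ℝ) (hlb : ∀ s, C ≤ V s - Vstar s) :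
    (∀ s, Vstar s ≤ V s) ∧
    (∀ p₀ : Measure (EuclideanSpace ℝ (Fin n)), IsProbabilityMeasure p₀ →
      Integrable V p₀ → Integrable Vstar p₀ →
      ∫ s, Vstar s ∂p₀ ≤ ∫ s, V s ∂p₀) := by
  have hVcont : ContinuousOn V Set.univ := hVconv.continuousOn isOpen_univ
  -- Jensen's inequality: V (Tstar s) ≤ ∫ V dκ s
  have hJensen : ∀ s, V (Tstar s) ≤ ∫ s', V s' ∂(κ s) := by
    intro s
    rw [hTstar s]
    haveI := hκ s
    exact hVconv.map_integral_le hVcont isClosed_univ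
      (Filter.Eventually.of_forall fun _ => Set.mem_univ _) (hκint s) (hVint s)
  -- one-step inequality
  have hstep : ∀ s, γ * (V (Tstar s) - Vstar (Tstar s)) ≤ V s - Vstar s := by
    intro s
    have h1 := hBell s
    have h2 := hBellstar s
    have h3 := hJensen s
    nlinarith [mul_le_mul_of_nonneg_left h3 hγ0]
  -- iterate
  have hiter : ∀ s k, γ ^ k * (V (Tstar^[k] s) - Vstar (Tstar^[k] s)) ≤ V s - Vstar s := by
    intro s k
    induction k with
    | zero => simp
    | succ k ih =>
      calc γ ^ (k + 1) * (V (Tstar^[k + 1] s) - Vstar (Tstar^[k + 1] s))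
          = γ ^ k * (γ * (V (Tstar (Tstar^[k] s)) - Vstar (Tstar (Tstar^[k] s)))) := by
            rw [Function.iterate_succ_apply']; ring
        _ ≤ γ ^ k * (V (Tstar^[k] s) - Vstar (Tstar^[k] s)) := by
            exact mul_le_mul_of_nonneg_left (hstep _) (pow_nonneg hγ0 k)
        _ ≤ V s - Vstar s := ih
  have hpt : ∀ s, Vstar s ≤ V s := by
    intro s
    have hbound : ∀ k, γ ^ k * C ≤ V s - Vstar s := by
      intro k
      calc γ ^ k * C ≤ γ ^ k * (V (Tstar^[k] s) - Vstar (Tstar^[k] s)) :=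
            mul_le_mul_of_nonneg_left (hlb _) (pow_nonneg hγ0 k)
        _ ≤ V s - Vstar s := hiter s k
    have hlim : Filter.Tendsto (fun k => γ ^ k * C) Filter.atTop (nhds 0) := by
      simpa using (tendsto_pow_atTop_nhds_zero_of_lt_one hγ0 hγ1).mul_const C
    have h0 : (0 : ℝ) ≤ V s - Vstar s :=
      le_of_tendsto hlim (Filter.Eventually.of_forall hbound)
    linarith
  refine ⟨hpt, fun p₀ hp₀ hVi hVsi => integral_mono hVsi hVi hpt⟩
end
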